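/- Weighted Matrix Tree Theorem: For a connected graph G = (N, E) with nodes N = {1, …, n}, positive edge weights B_l > 0, weighted Laplacian L = C·diag(B)·C^T (where C is the signed incidence matrix), and reduced Laplacian L̄ obtained from L by deleting the n-th row and column, one has det(L̄) = Σ_{F ∈ T_E} β(F), where T_E is the set of edge subsets of E forming spanning trees of G and β(F) = Π_{l∈F} B_l. -/

import Mathlib

open Matrix Finset

variable {n m : ℕ}

/-- Nodes `a` and `b` are joined by some edge in the edge set `S`. -/
def edgeAdj (src tgt : Fin m → Fin (n + 1)) (S : Finset (Fin m)) (a b : Fin (n + 1)) : Prop :=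
  ∃ e ∈ S, (src e = a ∧ tgt e = b) ∨ (src e = b ∧ tgt e = a)

/-- The spanning subgraph with edge set `S` is connected. -/
def ConnectedOn (src tgt : Fin m → Fin (n + 1)) (S : Finset (Fin m)) : Prop :=
  ∀ a b : Fin (n + 1), Relation.ReflTransGen (edgeAdj src tgt S) a b

/-- `F` is the edge set of a spanning tree of the graph on `n + 1` nodes
(a connected spanning subgraph with exactly `n` edges). -/
def IsSpanningTree (src tgt : Fin m → Fin (n + 1)) (F : Finset (Fin m)) : Prop :=
  F.card = n ∧ ConnectedOn src tgt F

/-- Connectivity within the vertex set `V`, using only edges of `S` traversed inside `V`. -/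
def ConnWithin (src tgt : Fin m → Fin (n + 1)) (S : Finset (Fin m))
    (V : Finset (Fin (n + 1))) : Prop :=
  ∀ a ∈ V, ∀ b ∈ V,
    Relation.ReflTransGen (fun x y => x ∈ V ∧ y ∈ V ∧ edgeAdj src tgt S x y) a b

/-- `F` is a spanning forest of exactly two vertex-disjoint trees, one containing all
nodes in `N1` and the other containing all nodes in `N2`. -/
def IsSpanningForest2 (src tgt : Fin m → Fin (n + 1)) (F : Finset (Fin m))
    (N1 N2 : Finset (Fin (n + 1))) : Prop :=
  ∃ V1 V2 : Finset (Fin (n + 1)),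
    Disjoint V1 V2 ∧ V1 ∪ V2 = Finset.univ ∧ V1.Nonempty ∧ V2.Nonempty ∧
      N1 ⊆ V1 ∧ N2 ⊆ V2 ∧ F.card + 1 = n ∧
      (∀ e ∈ F, (src e ∈ V1 ∧ tgt e ∈ V1) ∨ (src e ∈ V2 ∧ tgt e ∈ V2)) ∧
      ConnWithin src tgt F V1 ∧ ConnWithin src tgt F V2

/-- The (signed) incidence matrix `C`. -/
def incMat (src tgt : Fin m → Fin (n + 1)) : Matrix (Fin (n + 1)) (Fin m) ℝ :=
  Matrix.of fun i e => if src e = i then 1 else if tgt e = i then -1 else 0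

/-- The weighted Laplacian `L = C ⬝ diag B ⬝ Cᵀ`. -/
noncomputable def lap (src tgt : Fin m → Fin (n + 1)) (B : Fin m → ℝ) :
    Matrix (Fin (n + 1)) (Fin (n + 1)) ℝ :=
  incMat src tgt * Matrix.diagonal B * (incMat src tgt)ᵀ

/-- The reduced Laplacian: delete the row and column of the reference node `Fin.last n`. -/
noncomputable def rlap (src tgt : Fin m → Fin (n + 1)) (B : Fin m → ℝ) :
    Matrix (Fin n) (Fin n) ℝ :=
  (lap src tgt B).submatrix Fin.castSucc Fin.castSucc

/-- The inverse of the reduced Laplacian, padded with a zero row and column at the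
reference node. -/
noncomputable def Amat (src tgt : Fin m → Fin (n + 1)) (B : Fin m → ℝ) :
    Matrix (Fin (n + 1)) (Fin (n + 1)) ℝ :=
  Matrix.of fun i j =>
    if hi : i = Fin.last n then 0
    else if hj : j = Fin.last n then 0
    else (rlap src tgt B)⁻¹ (i.castPred hi) (j.castPred hj)

open Classical in
/-- `Σ_{F ∈ T_E} β(F)`: total weight of all spanning trees. -/
noncomputable def treeSum (src tgt : Fin m → Fin (n + 1)) (B : Fin m → ℝ) : ℝ :=
  ∑ F ∈ Finset.univ.filter (fun F => IsSpanningTree src tgt F), ∏ e ∈ F, B e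

open Classical in
/-- `Σ_{F ∈ T_{−l}} β(F)`: total weight of all spanning trees avoiding the edge `l`. -/
noncomputable def treeSumAvoiding (src tgt : Fin m → Fin (n + 1)) (B : Fin m → ℝ)
    (l : Fin m) : ℝ :=
  ∑ F ∈ Finset.univ.filter (fun F => IsSpanningTree src tgt F ∧ l ∉ F), ∏ e ∈ F, B e

open Classical in
/-- `Σ_{F ∈ T(N1, N2)} β(F)`: total weight of two-tree spanning forests separating
`N1` from `N2`. -/
noncomputable def forestSum (src tgt : Fin m → Fin (n + 1)) (B : Fin m → ℝ)
    (N1 N2 : Finset (Fin (n + 1))) : ℝ :=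
  ∑ F ∈ Finset.univ.filter (fun F => IsSpanningForest2 src tgt F N1 N2), ∏ e ∈ F, B e

/-- The power transfer distribution factor `D_{l, î ĵ}`. -/
noncomputable def ptdf (src tgt : Fin m → Fin (n + 1)) (B : Fin m → ℝ) (l : Fin m)
    (ihat jhat : Fin (n + 1)) : ℝ :=
  B l * (Amat src tgt B (src l) ihat + Amat src tgt B (tgt l) jhat
    - Amat src tgt B (src l) jhat - Amat src tgt B (tgt l) ihat)

/-- An edge is a bridge if its removal disconnects the graph. -/
def IsBridge (src tgt : Fin m → Fin (n + 1)) (l : Fin m) : Prop :=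
  ¬ ConnectedOn src tgt (Finset.univ.erase l)

/-- There is a simple cycle (distinct edges, distinct vertices) containing both edges
`l` and `lhat`. -/
def ExistsSimpleCycleThrough (src tgt : Fin m → Fin (n + 1)) (l lhat : Fin m) : Prop :=
  ∃ (k : ℕ) (es : Fin (k + 2) → Fin m) (vs : Fin (k + 2) → Fin (n + 1)),
    Function.Injective es ∧ Function.Injective vs ∧
      (∀ t, (src (es t) = vs t ∧ tgt (es t) = vs (t + 1)) ∨
        (src (es t) = vs (t + 1) ∧ tgt (es t) = vs t)) ∧
      (∃ t, es t = l) ∧ (∃ t, es t = lhat)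

/-- The incidence submatrix `C_{−F}` on the surviving edges. -/
def Cminus (src tgt : Fin m → Fin (n + 1)) (F : Finset (Fin m)) :
    Matrix (Fin (n + 1)) {e : Fin m // e ∉ F} ℝ :=
  (incMat src tgt).submatrix id (fun e => e.val)

/-- The incidence submatrix `C_F` on the removed edges. -/
def Cof (src tgt : Fin m → Fin (n + 1)) (F : Finset (Fin m)) :
    Matrix (Fin (n + 1)) {e : Fin m // e ∈ F} ℝ :=
  (incMat src tgt).submatrix id (fun e => e.val)

/-- The diagonal susceptance submatrix `B_{−F}` on the surviving edges. -/
noncomputable def Bminus (B : Fin m → ℝ) (F : Finset (Fin m)) :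
    Matrix {e : Fin m // e ∉ F} {e : Fin m // e ∉ F} ℝ :=
  Matrix.diagonal fun e => B e.val

/-- The diagonal susceptance submatrix `B_F` on the removed edges. -/
noncomputable def Bof (B : Fin m → ℝ) (F : Finset (Fin m)) :
    Matrix {e : Fin m // e ∈ F} {e : Fin m // e ∈ F} ℝ :=
  Matrix.diagonal fun e => B e.val

/-- The post-contingency Laplacian `L_{−F} = C_{−F} ⬝ B_{−F} ⬝ C_{−F}ᵀ`. -/
noncomputable def lapMinus (src tgt : Fin m → Fin (n + 1)) (B : Fin m → ℝ)
    (F : Finset (Fin m)) : Matrix (Fin (n + 1)) (Fin (n + 1)) ℝ :=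
  Cminus src tgt F * Bminus B F * (Cminus src tgt F)ᵀ

/-- The padded inverse `A_{−F}` of the post-contingency reduced Laplacian. -/
noncomputable def AmatMinus (src tgt : Fin m → Fin (n + 1)) (B : Fin m → ℝ)
    (F : Finset (Fin m)) : Matrix (Fin (n + 1)) (Fin (n + 1)) ℝ :=
  Matrix.of fun i j =>
    if hi : i = Fin.last n then 0
    else if hj : j = Fin.last n then 0
    else ((lapMinus src tgt B F).submatrix Fin.castSucc Fin.castSucc)⁻¹
      (i.castPred hi) (j.castPred hj)

/-- The pre-contingency branch flow vector `f = diag(B) ⬝ Cᵀ ⬝ A ⬝ p`. -/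
noncomputable def flowPre (src tgt : Fin m → Fin (n + 1)) (B : Fin m → ℝ)
    (p : Fin (n + 1) → ℝ) : Fin m → ℝ :=
  (Matrix.diagonal B * (incMat src tgt)ᵀ * Amat src tgt B) *ᵥ p

/-- The post-contingency branch flow vector `f̃_{−F} = B_{−F} ⬝ C_{−F}ᵀ ⬝ A_{−F} ⬝ p`
on the surviving edges. -/
noncomputable def flowPost (src tgt : Fin m → Fin (n + 1)) (B : Fin m → ℝ)
    (F : Finset (Fin m)) (p : Fin (n + 1) → ℝ) : {e : Fin m // e ∉ F} → ℝ :=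
  (Bminus B F * (Cminus src tgt F)ᵀ * AmatMinus src tgt B F) *ᵥ p

/-- The generalized line outage distribution factor matrix
`K^F = B_{−F} ⬝ C_{−F}ᵀ ⬝ A_{−F} ⬝ C_F`. -/
noncomputable def glodf (src tgt : Fin m → Fin (n + 1)) (B : Fin m → ℝ)
    (F : Finset (Fin m)) : Matrix {e : Fin m // e ∉ F} {e : Fin m // e ∈ F} ℝ :=
  Bminus B F * (Cminus src tgt F)ᵀ * AmatMinus src tgt B F * Cof src tgt F

/-- The PTDF submatrix `D_{FF} = B_F ⬝ C_Fᵀ ⬝ A ⬝ C_F`. -/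
noncomputable def Dff (src tgt : Fin m → Fin (n + 1)) (B : Fin m → ℝ)
    (F : Finset (Fin m)) : Matrix {e : Fin m // e ∈ F} {e : Fin m // e ∈ F} ℝ :=
  Bof B F * (Cof src tgt F)ᵀ * Amat src tgt B * Cof src tgt F

/-- The PTDF submatrix `D_{−FF} = B_{−F} ⬝ C_{−F}ᵀ ⬝ A ⬝ C_F`. -/
noncomputable def DmFF (src tgt : Fin m → Fin (n + 1)) (B : Fin m → ℝ)
    (F : Finset (Fin m)) : Matrix {e : Fin m // e ∉ F} {e : Fin m // e ∈ F} ℝ :=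
  Bminus B F * (Cminus src tgt F)ᵀ * Amat src tgt B * Cof src tgt F

/-- **Weighted Matrix Tree Theorem.**
For a connected simple graph with positive edge weights, the determinant of the reduced
weighted Laplacian equals the total weight of all spanning trees. -/
lemma wmtt_tu : ∀ (k : ℕ) (M : Matrix (Fin k) (Fin k) ℝ),
    (∀ i j, M i j = 0 ∨ M i j = 1 ∨ M i j = -1) →
    (∀ j i i', i ≠ i' → M i j ≠ 0 → M i' j ≠ 0 → M i j + M i' j = 0) →
    M.det = 0 ∨ M.det = 1 ∨ M.det = -1 := by
  intro k
  induction k with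
  | zero => intro M _ _; right; left; exact Matrix.det_fin_zero
  | succ k ih =>
    intro M h1 h2
    by_cases hall : ∀ j, ∃ i i', i ≠ i' ∧ M i j ≠ 0 ∧ M i' j ≠ 0
    · left
      have hsum : ∀ j, ∑ i, M i j = 0 := by
        intro j
        obtain ⟨i, i', hne, hi, hi'⟩ := hall j
        have hz : ∀ i'', i'' ≠ i → i'' ≠ i' → M i'' j = 0 := by
          intro i'' ha hb
          by_contra hnz
          have e1 := h2 j i i' hne hi hi'
          have e2 := h2 j i i'' (Ne.symm ha) hi hnz
          have e3 := h2 j i' i'' (Ne.symm hb) hi' hnz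
          have : M i'' j = 0 := by linarith
          exact hnz this
        have hsub : ∑ x ∈ ({i, i'} : Finset (Fin (k+1))), M x j = ∑ x, M x j := by
          apply Finset.sum_subset (Finset.subset_univ _)
          intro x _ hx
          simp only [Finset.mem_insert, Finset.mem_singleton, not_or] at hx
          exact hz x hx.1 hx.2
        rw [← hsub, Finset.sum_pair hne]
        exact h2 j i i' hne hi hi'
      have hker : Mᵀ *ᵥ (fun _ => (1:ℝ)) = 0 := by
        funext j
        simp only [Matrix.mulVec, dotProduct, Matrix.transpose_apply, mul_one,
          Pi.zero_apply]
        exact hsum j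
      have hdet : Mᵀ.det = 0 := by
        rw [← Matrix.exists_mulVec_eq_zero_iff]
        refine ⟨fun _ => (1:ℝ), ?_, hker⟩
        intro h
        have := congrFun h 0
        norm_num at this
      rw [← Matrix.det_transpose]
      exact hdet
    · push_neg at hall
      obtain ⟨j, hj⟩ := hall
      by_cases hex : ∃ i₀, M i₀ j ≠ 0
      · obtain ⟨i₀, hi₀⟩ := hex
        have hz : ∀ i, i ≠ i₀ → M i j = 0 := by
          intro i hi
          by_contra hnz
          exact hnz (hj i₀ i (Ne.symm hi) hi₀)
        rw [Matrix.det_succ_column M j,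
          Finset.sum_eq_single i₀ (fun b _ hb => by rw [hz b hb]; ring)
            (fun h => (h (Finset.mem_univ i₀)).elim)]
        have hm := ih (M.submatrix i₀.succAbove j.succAbove)
          (fun i j' => h1 _ _)
          (fun j' a b hab ha hb => h2 _ _ _
            (fun hh => hab (Fin.succAbove_right_injective hh)) ha hb)
        have hs := neg_one_pow_eq_or ℝ ((i₀ : ℕ) + (j : ℕ))
        rcases h1 i₀ j with h | h | h
        · exact absurd h hi₀
        all_goals rcases hm with hd | hd | hd <;> rcases hs with hs | hs <;>
          rw [hs, h, hd] <;> norm_num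
      · push_neg at hex
        left
        exact Matrix.det_eq_zero_of_column_eq_zero j hex

lemma wmtt_cb {p q : ℕ} (A : Matrix (Fin p) (Fin q) ℝ) (B : Matrix (Fin q) (Fin p) ℝ) :
    (A * B).det = ∑ S : Finset (Fin q),
      if h : S.card = p then
        (A.submatrix id (S.orderEmbOfFin h)).det * (B.submatrix (S.orderEmbOfFin h) id).det
      else 0 := by
  classical
  have step1 : (A * B).det
      = ∑ f : Fin p → Fin q, (∏ i, B (f i) i) * (A.submatrix id f).det := by
    rw [Matrix.det_apply']
    have h1 : ∀ σ : Equiv.Perm (Fin p), ∏ i, (A * B) (σ i) i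
        = ∑ f : Fin p → Fin q, ∏ i, A (σ i) (f i) * B (f i) i := by
      intro σ
      simp only [Matrix.mul_apply]
      rw [← Fintype.piFinset_univ, Finset.prod_univ_sum]
    simp only [h1, Finset.mul_sum]
    rw [Finset.sum_comm]
    refine Finset.sum_congr rfl fun f _ => ?_
    rw [Matrix.det_apply', Finset.mul_sum]
    refine Finset.sum_congr rfl fun σ _ => ?_
    rw [Finset.prod_mul_distrib]
    simp only [Matrix.submatrix_apply, id_eq]
    ring
  have step2 : ∑ f : Fin p → Fin q, (∏ i, B (f i) i) * (A.submatrix id f).det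
      = ∑ f ∈ Finset.univ.filter (fun f : Fin p → Fin q => Function.Injective f),
          (∏ i, B (f i) i) * (A.submatrix id f).det := by
    symm
    apply Finset.sum_subset (Finset.filter_subset _ _)
    intro f _ hf
    simp only [Finset.mem_filter, Finset.mem_univ, true_and] at hf
    rw [Function.not_injective_iff] at hf
    obtain ⟨a, b, hab, hne⟩ := hf
    have hz : (A.submatrix id f).det = 0 :=
      Matrix.det_zero_of_column_eq hne (fun k => by simp [Matrix.submatrix_apply, hab])
    rw [hz, mul_zero]
  have hmaps : ∀ f ∈ Finset.univ.filter (fun f : Fin p → Fin q => Function.Injective f),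
      Finset.image f Finset.univ ∈
        Finset.univ.filter (fun S : Finset (Fin q) => S.card = p) := by
    intro f hf
    simp only [Finset.mem_filter, Finset.mem_univ, true_and] at hf ⊢
    rw [Finset.card_image_of_injective _ hf, Finset.card_univ, Fintype.card_fin]
  have step3 := Finset.sum_fiberwise_of_maps_to hmaps
    (fun f => (∏ i, B (f i) i) * (A.submatrix id f).det)
  have inner : ∀ S ∈ Finset.univ.filter (fun S : Finset (Fin q) => S.card = p),
      ∑ f ∈ (Finset.univ.filter (fun f : Fin p → Fin q => Function.Injective f)).filter
          (fun f => Finset.image f Finset.univ = S),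
        (∏ i, B (f i) i) * (A.submatrix id f).det
      = (if h : S.card = p then
          (A.submatrix id (S.orderEmbOfFin h)).det * (B.submatrix (S.orderEmbOfFin h) id).det
        else 0) := by
    intro S hS
    simp only [Finset.mem_filter, Finset.mem_univ, true_and] at hS
    rw [dif_pos hS]
    set g := S.orderEmbOfFin hS with hg
    have hbij : ∑ σ : Equiv.Perm (Fin p),
          (∏ i, B (g (σ i)) i) * (A.submatrix id (fun i => g (σ i))).det
        = ∑ f ∈ (Finset.univ.filter (fun f : Fin p → Fin q => Function.Injective f)).filter
            (fun f => Finset.image f Finset.univ = S),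
          (∏ i, B (f i) i) * (A.submatrix id f).det := by
      refine Finset.sum_bij (fun σ _ => fun i => g (σ i)) ?_ ?_ ?_ ?_
      · intro σ _
        simp only [Finset.mem_filter, Finset.mem_univ, true_and]
        constructor
        · exact fun a b hab => σ.injective (g.injective hab)
        · ext x
          simp only [Finset.mem_image, Finset.mem_univ, true_and]
          constructor
          · rintro ⟨i, rfl⟩
            exact Finset.orderEmbOfFin_mem S hS _
          · intro hx
            obtain ⟨i, hi⟩ : ∃ i, g i = x := by
              have hr := Finset.range_orderEmbOfFin S hS
              rw [Set.ext_iff] at hr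
              exact (hr x).mpr hx
            exact ⟨σ.symm i, by simp [hi]⟩
      · intro σ _ σ' _ hσ
        ext i
        exact congrArg _ (g.injective (congrFun hσ i))
      · intro f hf
        simp only [Finset.mem_filter, Finset.mem_univ, true_and] at hf
        obtain ⟨hinj, himg⟩ := hf
        have hfm : ∀ i, f i ∈ S := fun i =>
          himg ▸ Finset.mem_image_of_mem f (Finset.mem_univ i)
        set u : Fin p → Fin p := fun i => (S.orderIsoOfFin hS).symm ⟨f i, hfm i⟩ with hu
        have hgu : ∀ i, g (u i) = f i := by
          intro i
          rw [hg, ← Finset.coe_orderIsoOfFin_apply, hu, OrderIso.apply_symm_apply]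
        have huinj : Function.Injective u := by
          intro a b hab
          apply hinj
          rw [← hgu a, ← hgu b, hab]
        refine ⟨Equiv.ofBijective u (Finite.injective_iff_bijective.mp huinj),
          Finset.mem_univ _, ?_⟩
        funext i
        exact hgu i
      · intro σ _; rfl
    rw [← hbij]
    have hdet : ∀ σ : Equiv.Perm (Fin p),
        (A.submatrix id (fun i => g (σ i))).det
          = (Equiv.Perm.sign σ : ℤ) * (A.submatrix id g).det := by
      intro σ
      have he : A.submatrix id (fun i => g (σ i)) = (A.submatrix id g).submatrix id σ := rfl
      rw [he, Matrix.det_permute']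
    calc ∑ σ : Equiv.Perm (Fin p),
          (∏ i, B (g (σ i)) i) * (A.submatrix id (fun i => g (σ i))).det
        = (A.submatrix id g).det *
            ∑ σ : Equiv.Perm (Fin p), ((Equiv.Perm.sign σ : ℤ) : ℝ) * ∏ i, B (g (σ i)) i := by
          rw [Finset.mul_sum]
          refine Finset.sum_congr rfl fun σ _ => ?_
          rw [hdet σ]
          ring
      _ = (A.submatrix id g).det * (B.submatrix g id).det := by
          congr 1
          rw [Matrix.det_apply']
          exact Finset.sum_congr rfl fun σ _ => rfl
  calc (A * B).det
      = ∑ f ∈ Finset.univ.filter (fun f : Fin p → Fin q => Function.Injective f),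
          (∏ i, B (f i) i) * (A.submatrix id f).det := by rw [step1, step2]
    _ = ∑ S ∈ Finset.univ.filter (fun S : Finset (Fin q) => S.card = p),
          (if h : S.card = p then
            (A.submatrix id (S.orderEmbOfFin h)).det * (B.submatrix (S.orderEmbOfFin h) id).det
          else 0) := by
          rw [← step3]
          exact Finset.sum_congr rfl inner
    _ = ∑ S : Finset (Fin q),
          (if h : S.card = p then
            (A.submatrix id (S.orderEmbOfFin h)).det * (B.submatrix (S.orderEmbOfFin h) id).det
          else 0) := by
          apply Finset.sum_subset (Finset.filter_subset _ _)
          intro S _ hS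
          simp only [Finset.mem_filter, Finset.mem_univ, true_and] at hS
          rw [dif_neg hS]

lemma wmtt_col (src tgt : Fin m → Fin (n + 1)) (hsimple : ∀ e, src e ≠ tgt e)
    (x : Fin (n + 1) → ℝ) (hx : x (Fin.last n) = 0) (e : Fin m) :
    ∑ i : Fin n, incMat src tgt (Fin.castSucc i) e * x (Fin.castSucc i)
      = x (src e) - x (tgt e) := by
  have h : ∀ v : Fin (n + 1), incMat src tgt v e * x v
      = (if src e = v then x v else 0) - (if tgt e = v then x v else 0) := by
    intro v
    by_cases h1 : src e = v
    · have h2 : tgt e ≠ v := fun hh => hsimple e (h1.trans hh.symm)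
      simp [incMat, h1, h2]
    · by_cases h2 : tgt e = v
      · simp [incMat, h1, h2]
      · simp [incMat, h1, h2]
  have hfull : ∑ v : Fin (n + 1), incMat src tgt v e * x v = x (src e) - x (tgt e) := by
    simp only [h]
    rw [Finset.sum_sub_distrib]
    simp [Finset.sum_ite_eq]
  rw [Fin.sum_univ_castSucc] at hfull
  have hlast : incMat src tgt (Fin.last n) e * x (Fin.last n) = 0 := by rw [hx, mul_zero]
  rw [hlast, add_zero] at hfull
  exact hfull

lemma wmtt_adj_symm (src tgt : Fin m → Fin (n + 1)) (S : Finset (Fin m)) :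
    Symmetric (edgeAdj src tgt S) := by
  rintro a b ⟨e, he, h | h⟩
  · exact ⟨e, he, Or.inr h⟩
  · exact ⟨e, he, Or.inl h⟩

lemma wmtt_det_ne_zero (src tgt : Fin m → Fin (n + 1)) (hsimple : ∀ e, src e ≠ tgt e)
    (S : Finset (Fin m)) (hcard : S.card = n) (hconn : ConnectedOn src tgt S) :
    ((incMat src tgt).submatrix Fin.castSucc (S.orderEmbOfFin hcard)).det ≠ 0 := by
  set M := (incMat src tgt).submatrix Fin.castSucc (S.orderEmbOfFin hcard) with hM
  intro hdet
  have hdt : Mᵀ.det = 0 := by rw [Matrix.det_transpose]; exact hdet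
  obtain ⟨x, hx0, hker⟩ := (Matrix.exists_mulVec_eq_zero_iff).mpr hdt
  set xh : Fin (n + 1) → ℝ := fun v => if hv : v = Fin.last n then 0 else x (v.castPred hv)
    with hxh
  have hlast : xh (Fin.last n) = 0 := by simp [hxh]
  have hcs : ∀ i : Fin n, xh (Fin.castSucc i) = x i := by
    intro i
    have hne : Fin.castSucc i ≠ Fin.last n := (Fin.castSucc_lt_last i).ne
    simp [hxh, hne]
  have hedge : ∀ e ∈ S, xh (src e) = xh (tgt e) := by
    intro e he
    obtain ⟨j, hj⟩ : ∃ j, S.orderEmbOfFin hcard j = e := by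
      have hr := Finset.range_orderEmbOfFin S hcard
      rw [Set.ext_iff] at hr
      exact (hr e).mpr he
    have hk := congrFun hker j
    have hexp : (Mᵀ *ᵥ x) j = ∑ i : Fin n,
        incMat src tgt (Fin.castSucc i) e * xh (Fin.castSucc i) := by
      simp only [Matrix.mulVec, dotProduct, Matrix.transpose_apply, hM,
        Matrix.submatrix_apply, hj]
      exact Finset.sum_congr rfl fun i _ => by rw [hcs i]
    rw [hexp, wmtt_col src tgt hsimple xh hlast e] at hk
    have hk' : xh (src e) - xh (tgt e) = 0 := by simpa using hk
    linarith
  have hinv : ∀ a b, Relation.ReflTransGen (edgeAdj src tgt S) a b → xh a = xh b := by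
    intro a b hab
    induction hab with
    | refl => rfl
    | tail _ hstep ih =>
      obtain ⟨e, he, hc⟩ := hstep
      rcases hc with ⟨h1, h2⟩ | ⟨h1, h2⟩
      · rw [ih, ← h1, ← h2, hedge e he]
      · rw [ih, ← h1, ← h2, hedge e he]
  apply hx0
  funext i
  have := hinv (Fin.castSucc i) (Fin.last n) (hconn _ _)
  rw [hcs i, hlast] at this
  exact this

lemma wmtt_det_zero (src tgt : Fin m → Fin (n + 1)) (hsimple : ∀ e, src e ≠ tgt e)
    (S : Finset (Fin m)) (hcard : S.card = n) (hnc : ¬ ConnectedOn src tgt S) :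
    ((incMat src tgt).submatrix Fin.castSucc (S.orderEmbOfFin hcard)).det = 0 := by
  classical
  set M := (incMat src tgt).submatrix Fin.castSucc (S.orderEmbOfFin hcard) with hM
  rw [← Matrix.det_transpose, ← Matrix.exists_mulVec_eq_zero_iff]
  set R : Fin (n + 1) → Prop :=
    fun v => Relation.ReflTransGen (edgeAdj src tgt S) v (Fin.last n) with hR
  set xh : Fin (n + 1) → ℝ := fun v => if R v then 0 else 1 with hxh
  have hsym := wmtt_adj_symm src tgt S
  obtain ⟨v, hvR⟩ : ∃ v, ¬ R v := by
    by_contra hall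
    push_neg at hall
    apply hnc
    intro a b
    exact (hall a).trans (haveI : Std.Symm (edgeAdj src tgt S) := ⟨fun _ _ h => hsym h⟩; Std.Symm.symm _ _ (hall b))
  have hvlast : v ≠ Fin.last n := fun h => hvR (h ▸ Relation.ReflTransGen.refl)
  have hlast : xh (Fin.last n) = 0 := by
    simp only [hxh, hR]
    rw [if_pos Relation.ReflTransGen.refl]
  refine ⟨fun i => xh (Fin.castSucc i), ?_, ?_⟩
  · intro h
    have hv := congrFun h (v.castPred hvlast)
    simp only [hxh, Fin.castSucc_castPred, Pi.zero_apply] at hv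
    rw [if_neg hvR] at hv
    norm_num at hv
  · funext j
    set e := S.orderEmbOfFin hcard j with he'
    have he : e ∈ S := Finset.orderEmbOfFin_mem S hcard j
    have hadj : edgeAdj src tgt S (src e) (tgt e) := ⟨e, he, Or.inl ⟨rfl, rfl⟩⟩
    have hiff : R (src e) ↔ R (tgt e) :=
      ⟨fun h => Relation.ReflTransGen.head (hsym hadj) h,
       fun h => Relation.ReflTransGen.head hadj h⟩
    have hxe : xh (src e) = xh (tgt e) := by
      simp only [hxh]
      by_cases h : R (src e)
      · rw [if_pos h, if_pos (hiff.mp h)]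
      · rw [if_neg h, if_neg (fun hh => h (hiff.mpr hh))]
    have hexp : (Mᵀ *ᵥ fun i => xh (Fin.castSucc i)) j = ∑ i : Fin n,
        incMat src tgt (Fin.castSucc i) e * xh (Fin.castSucc i) := by
      simp only [Matrix.mulVec, dotProduct, Matrix.transpose_apply, hM,
        Matrix.submatrix_apply, he']
    rw [hexp, wmtt_col src tgt hsimple xh hlast e, hxe, Pi.zero_apply, sub_self]

theorem weighted_matrix_tree_theorem
    (src tgt : Fin m → Fin (n + 1)) (B : Fin m → ℝ)
    (hB : ∀ e, 0 < B e)
    (hsimple : ∀ e, src e ≠ tgt e)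
    (hconn : ConnectedOn src tgt Finset.univ) :
    (rlap src tgt B).det = treeSum src tgt B := by
  classical
  have hr : rlap src tgt B =
      (incMat src tgt).submatrix Fin.castSucc id *
        (Matrix.diagonal B * ((incMat src tgt).submatrix Fin.castSucc id)ᵀ) := by
    ext i j
    simp only [rlap, lap, Matrix.submatrix_apply, Matrix.mul_apply, Matrix.transpose_apply,
      Matrix.diagonal_apply, id_eq, mul_ite, mul_zero, ite_mul, zero_mul,
      Finset.sum_ite_eq, Finset.sum_ite_eq', Finset.mem_univ, if_true]
    exact Finset.sum_congr rfl fun e _ => by ring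
  rw [hr, wmtt_cb]
  unfold treeSum
  rw [Finset.sum_filter]
  refine Finset.sum_congr rfl fun S _ => ?_
  by_cases h : S.card = n
  · rw [dif_pos h]
    set g := S.orderEmbOfFin h with hg
    have hsub : (((incMat src tgt).submatrix Fin.castSucc id).submatrix id ⇑g)
        = (incMat src tgt).submatrix Fin.castSucc ⇑g := rfl
    have hfact : ((Matrix.diagonal B *
          ((incMat src tgt).submatrix Fin.castSucc id)ᵀ).submatrix ⇑g id)
        = Matrix.diagonal (fun j => B (g j)) *
            ((incMat src tgt).submatrix Fin.castSucc ⇑g)ᵀ := by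
      ext a b
      simp only [Matrix.submatrix_apply, Matrix.diagonal_mul, Matrix.transpose_apply, id_eq]
    rw [hsub, hfact, Matrix.det_mul, Matrix.det_diagonal, Matrix.det_transpose]
    have hprod : (∏ j : Fin n, B (g j)) = ∏ e ∈ S, B e := by
      refine Finset.prod_bij (fun j _ => g j) ?_ ?_ ?_ ?_
      · intro j _; exact Finset.orderEmbOfFin_mem S h j
      · intro a _ b _ hab; exact g.injective hab
      · intro e he
        have hrr := Finset.range_orderEmbOfFin S h
        rw [Set.ext_iff] at hrr
        obtain ⟨j, hj⟩ := (hrr e).mpr he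
        exact ⟨j, Finset.mem_univ j, hj⟩
      · intro j _; rfl
    by_cases hcn : ConnectedOn src tgt S
    · rw [if_pos (show IsSpanningTree src tgt S from ⟨h, hcn⟩), ← hprod]
      have hne := wmtt_det_ne_zero src tgt hsimple S h hcn
      have h1 : ∀ a b, ((incMat src tgt).submatrix Fin.castSucc ⇑g) a b = 0 ∨
          ((incMat src tgt).submatrix Fin.castSucc ⇑g) a b = 1 ∨
          ((incMat src tgt).submatrix Fin.castSucc ⇑g) a b = -1 := by
        intro a b
        simp only [Matrix.submatrix_apply, incMat, Matrix.of_apply]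
        split_ifs <;> norm_num
      have hval : ∀ (v : Fin (n + 1)) (e : Fin m), incMat src tgt v e = 0 ∨
          (src e = v ∧ incMat src tgt v e = 1) ∨
          (tgt e = v ∧ incMat src tgt v e = -1) := by
        intro v e
        simp only [incMat, Matrix.of_apply]
        split_ifs with hS hT
        · exact Or.inr (Or.inl ⟨hS, rfl⟩)
        · exact Or.inr (Or.inr ⟨hT, rfl⟩)
        · exact Or.inl rfl
      have h2 : ∀ jc a b, a ≠ b →
          ((incMat src tgt).submatrix Fin.castSucc ⇑g) a jc ≠ 0 →
          ((incMat src tgt).submatrix Fin.castSucc ⇑g) b jc ≠ 0 →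
          ((incMat src tgt).submatrix Fin.castSucc ⇑g) a jc +
            ((incMat src tgt).submatrix Fin.castSucc ⇑g) b jc = 0 := by
        intro jc a b hab ha hb
        simp only [Matrix.submatrix_apply] at ha hb ⊢
        rcases hval (Fin.castSucc a) (g jc) with h0 | ⟨hsa, hva⟩ | ⟨hta, hva⟩
        · exact absurd h0 ha
        · rcases hval (Fin.castSucc b) (g jc) with h0 | ⟨hsb, hvb⟩ | ⟨htb, hvb⟩
          · exact absurd h0 hb
          · exact absurd (Fin.castSucc_injective n (hsa.symm.trans hsb)) hab
          · rw [hva, hvb]; ring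
        · rcases hval (Fin.castSucc b) (g jc) with h0 | ⟨hsb, hvb⟩ | ⟨htb, hvb⟩
          · exact absurd h0 hb
          · rw [hva, hvb]; ring
          · exact absurd (Fin.castSucc_injective n (hta.symm.trans htb)) hab
      have htu := wmtt_tu n ((incMat src tgt).submatrix Fin.castSucc ⇑g) h1 h2
      have hdd : ((incMat src tgt).submatrix Fin.castSucc ⇑g).det *
          ((incMat src tgt).submatrix Fin.castSucc ⇑g).det = 1 := by
        rcases htu with h0 | h1' | h1'
        · exact absurd h0 hne
        · rw [h1']; norm_num
        · rw [h1']; norm_num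
      rw [mul_comm (∏ j : Fin n, B (g j))
        ((incMat src tgt).submatrix Fin.castSucc ⇑g).det, ← mul_assoc, hdd, one_mul]
    · rw [if_neg (fun hst : IsSpanningTree src tgt S => hcn hst.2),
        wmtt_det_zero src tgt hsimple S h hcn]
      ring
  · rw [dif_neg h, if_neg (fun hst : IsSpanningTree src tgt S => h hst.1)]
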